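/- arXiv:1011.5547 — 2 statements merged into one kernel-verified Lean document; each statement's English description precedes it below -/
import Mathlib

section
/- Suppose a⁰_{n,m} = a¹_{n,m} = 0, b⁰_{n,m} = 1, and b¹_{n,m} = 4ñ for all (n,m) ∈ ℤ², where ñ ∈ {1,…,p₁} is the representative of n modulo p₁ (so Aₙ = 0 and Bₙ = S + S⁻¹ + 4ñ·I is a shifted discrete 1D Schrödinger operator). Then σ(𝒥) = ⋃_{n=1}^{p₁} [4n − 2, 4n + 2] = [2, 4p₁ + 2]; in particular mes(σ(𝒥)) = 4p₁, so the estimate mes(σ(𝒥)) ≤ 4 min_β Σ_{n=1}^{p₁}|b⁰_{n,β}| + 4 min_α Σ_{m=1}^{p₂}|a¹_{α,m}| = 4p₁ is attained with equality. -/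
open scoped ComplexConjugate Matrix ENNReal

noncomputable section

/-- `ℓ²(ℤ)`, the Hilbert space of square-summable complex sequences indexed by `ℤ`. -/
abbrev H1 : Type := lp (fun _ : ℤ => ℂ) 2

/-- `ℓ²(ℤ²)`, the Hilbert space of square-summable complex sequences indexed by `ℤ × ℤ`. -/
abbrev H2 : Type := lp (fun _ : ℤ × ℤ => ℂ) 2

/-- `x` is doubly periodic with period `p₁` in the first index and `p₂` in the second index. -/
def Periodic2 {α : Type*} (p₁ p₂ : ℕ) (x : ℤ → ℤ → α) : Prop :=
  ∀ n m : ℤ, x (n + (p₁ : ℤ)) m = x n m ∧ x n (m + (p₂ : ℤ)) = x n m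

/-- `J` acts as the 2D periodic Jacobi operator `(𝒥 f)ₙ = Aₙ f_{n+1} + Bₙ fₙ + A*_{n−1} f_{n−1}`
on `ℓ²(ℤ²) = ℓ²(ℤ; ℓ²(ℤ))`, written out entrywise, where `Aₙ = S·A⁰ₙ + A¹ₙ + (S·A⁰ₙ)*` and
`Bₙ = S·B⁰ₙ + B¹ₙ + (S·B⁰ₙ)*` with `A⁰ₙ = diag(a⁰ₙₘ)`, `A¹ₙ = diag(a¹ₙₘ)`,
`B⁰ₙ = diag(b⁰ₙₘ)`, `B¹ₙ = diag(b¹ₙₘ)` and `S` the shift `(Sz)ₘ = z_{m−1}`. -/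
def IsJacobi2D (a0 a1 b0 : ℤ → ℤ → ℂ) (b1 : ℤ → ℤ → ℝ) (J : H2 →L[ℂ] H2) : Prop :=
  ∀ (f : H2) (n m : ℤ),
    (J f) (n, m) =
      a0 n (m - 1) * f (n + 1, m - 1) + a1 n m * f (n + 1, m) +
        conj (a0 n m) * f (n + 1, m + 1) +
      b0 n (m - 1) * f (n, m - 1) + (b1 n m : ℂ) * f (n, m) + conj (b0 n m) * f (n, m + 1) +
      a0 (n - 1) (m - 1) * f (n - 1, m - 1) + conj (a1 (n - 1) m) * f (n - 1, m) +
        conj (a0 (n - 1) m) * f (n - 1, m + 1)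

/-- `A` acts on `ℓ²(ℤ)` as the 1D periodic Jacobi matrix `S·diag(c0) + diag(c1) + (S·diag(c0))*`,
i.e. `(A z)ₘ = c0_{m−1} z_{m−1} + c1ₘ zₘ + conj(c0ₘ) z_{m+1}`. -/
def IsJacobi1D (c0 c1 : ℤ → ℂ) (A : H1 →L[ℂ] H1) : Prop :=
  ∀ (z : H1) (m : ℤ),
    (A z) m = c0 (m - 1) * z (m - 1) + c1 m * z m + conj (c0 m) * z (m + 1)

/-- The `p × p` Floquet Jacobi matrix `Âₙ(x)` (resp. `B̂ₙ(x)`) built from the off-diagonal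
sequence `c0` and the diagonal sequence `c1`; the index `i : Fin p` corresponds to the
1-based index `m = i + 1`.  The entries are: diagonal `c1_m`, subdiagonal `(m+1,m) = c0_m`,
superdiagonal `(m,m+1) = conj(c0_m)`, corners `(1,p) = e^{ix} c0_p`,
`(p,1) = e^{−ix} conj(c0_p)`. -/
def floquetMat (p : ℕ) (c0 c1 : ℤ → ℂ) (x : ℝ) : Matrix (Fin p) (Fin p) ℂ :=
  fun i j =>
    (if (i : ℕ) = (j : ℕ) + 1 then c0 (((j : ℕ) : ℤ) + 1) else 0) +
    (if (i : ℕ) = (j : ℕ) then c1 (((i : ℕ) : ℤ) + 1) else 0) +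
    (if (j : ℕ) = (i : ℕ) + 1 then conj (c0 (((i : ℕ) : ℤ) + 1)) else 0) +
    (if (i : ℕ) = 0 ∧ (j : ℕ) = p - 1 then Complex.exp (Complex.I * x) * c0 (p : ℤ) else 0) +
    (if (j : ℕ) = 0 ∧ (i : ℕ) = p - 1 then
      Complex.exp (-(Complex.I * x)) * conj (c0 (p : ℤ)) else 0)

/-- The matrix `Â⁰ₙ` (resp. `B̂⁰ₙ`): the Floquet matrix with corner entries replaced by `0`
(independent of `x`). -/
def floquetMat0 (p : ℕ) (c0 c1 : ℤ → ℂ) : Matrix (Fin p) (Fin p) ℂ :=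
  fun i j =>
    (if (i : ℕ) = (j : ℕ) + 1 then c0 (((j : ℕ) : ℤ) + 1) else 0) +
    (if (i : ℕ) = (j : ℕ) then c1 (((i : ℕ) : ℤ) + 1) else 0) +
    (if (j : ℕ) = (i : ℕ) + 1 then conj (c0 (((i : ℕ) : ℤ) + 1)) else 0)

/-- The `p₁p₂ × p₁p₂` Floquet block matrix `J(x,y)`: diagonal blocks `B̂ₙ(x)`,
block subdiagonal `Âₙ(x)`, block superdiagonal `Âₙ(x)*`, corner blocks `e^{iy} Â_{p₁}(x)`
(top right) and `e^{−iy} Â_{p₁}(x)*` (bottom left).  The block index `q.1 : Fin p₁`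
corresponds to the 1-based index `n = q.1 + 1`. -/
def JMat (p₁ p₂ : ℕ) (a0 a1 b0 : ℤ → ℤ → ℂ) (b1 : ℤ → ℤ → ℝ) (x y : ℝ) :
    Matrix (Fin p₁ × Fin p₂) (Fin p₁ × Fin p₂) ℂ :=
  fun q r =>
    (if (q.1 : ℕ) = (r.1 : ℕ) then
        floquetMat p₂ (b0 (((q.1 : ℕ) : ℤ) + 1)) (fun m => (b1 (((q.1 : ℕ) : ℤ) + 1) m : ℂ)) x
          q.2 r.2
      else 0) +
    (if (q.1 : ℕ) = (r.1 : ℕ) + 1 then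
        floquetMat p₂ (a0 (((r.1 : ℕ) : ℤ) + 1)) (a1 (((r.1 : ℕ) : ℤ) + 1)) x q.2 r.2
      else 0) +
    (if (r.1 : ℕ) = (q.1 : ℕ) + 1 then
        (floquetMat p₂ (a0 (((q.1 : ℕ) : ℤ) + 1)) (a1 (((q.1 : ℕ) : ℤ) + 1)) x)ᴴ q.2 r.2
      else 0) +
    (if (q.1 : ℕ) = 0 ∧ (r.1 : ℕ) = p₁ - 1 then
        Complex.exp (Complex.I * y) * floquetMat p₂ (a0 (p₁ : ℤ)) (a1 (p₁ : ℤ)) x q.2 r.2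
      else 0) +
    (if (r.1 : ℕ) = 0 ∧ (q.1 : ℕ) = p₁ - 1 then
        Complex.exp (-(Complex.I * y)) * (floquetMat p₂ (a0 (p₁ : ℤ)) (a1 (p₁ : ℤ)) x)ᴴ q.2 r.2
      else 0)

/-- The block-tridiagonal matrix `J₀`: diagonal blocks `B̂⁰ₙ`, block subdiagonal `Â⁰ₙ`,
block superdiagonal `(Â⁰ₙ)*`, zero corner blocks. -/
def J0Mat (p₁ p₂ : ℕ) (a0 a1 b0 : ℤ → ℤ → ℂ) (b1 : ℤ → ℤ → ℝ) :
    Matrix (Fin p₁ × Fin p₂) (Fin p₁ × Fin p₂) ℂ :=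
  fun q r =>
    (if (q.1 : ℕ) = (r.1 : ℕ) then
        floquetMat0 p₂ (b0 (((q.1 : ℕ) : ℤ) + 1)) (fun m => (b1 (((q.1 : ℕ) : ℤ) + 1) m : ℂ))
          q.2 r.2
      else 0) +
    (if (q.1 : ℕ) = (r.1 : ℕ) + 1 then
        floquetMat0 p₂ (a0 (((r.1 : ℕ) : ℤ) + 1)) (a1 (((r.1 : ℕ) : ℤ) + 1)) q.2 r.2
      else 0) +
    (if (r.1 : ℕ) = (q.1 : ℕ) + 1 then
        (floquetMat0 p₂ (a0 (((q.1 : ℕ) : ℤ) + 1)) (a1 (((q.1 : ℕ) : ℤ) + 1)))ᴴ q.2 r.2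
      else 0)

/-- The diagonal entries `d₁,…,d_{p₂}` of the matrix `D`:
`d_m = |a¹_{p₁,m}| + |a⁰_{p₁,m}| + |a⁰_{p₁,m−1}|`, where `a⁰_{p₁,0} := a⁰_{p₁,p₂}`. -/
def dVec (p₁ p₂ : ℕ) (a0 a1 : ℤ → ℤ → ℂ) (j : Fin p₂) : ℝ :=
  ‖a1 (p₁ : ℤ) (((j : ℕ) : ℤ) + 1)‖ +
  ‖a0 (p₁ : ℤ) (((j : ℕ) : ℤ) + 1)‖ +
  ‖a0 (p₁ : ℤ) (if (j : ℕ) = 0 then (p₂ : ℤ) else ((j : ℕ) : ℤ))‖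

/-- The (real) diagonal entries of the diagonal matrix `C = diag(C₁,…,C_{p₁})`, where
`Cₙ = diag(cₙ,0,…,0,cₙ)` with `cₙ = |b⁰_{n,p₂}| + |a⁰_{n,p₂}| + |a⁰_{n−1,p₂}|` for
`2 ≤ n ≤ p₁−1`, `C₁ = diag(c₁⁰,0,…,0,c₁⁰) + D` with `c₁⁰ = |b⁰_{1,p₂}| + |a⁰_{1,p₂}|`, and
`C_{p₁} = diag(c⁰,0,…,0,c⁰) + D` with `c⁰ = |b⁰_{p₁,p₂}| + |a⁰_{p₁−1,p₂}|`. -/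
def CDiag (p₁ p₂ : ℕ) (a0 a1 b0 : ℤ → ℤ → ℂ) (q : Fin p₁ × Fin p₂) : ℝ :=
  (if (q.2 : ℕ) = 0 ∨ (q.2 : ℕ) = p₂ - 1 then
      (if (q.1 : ℕ) = 0 then ‖b0 1 (p₂ : ℤ)‖ + ‖a0 1 (p₂ : ℤ)‖
       else if (q.1 : ℕ) = p₁ - 1 then
         ‖b0 (p₁ : ℤ) (p₂ : ℤ)‖ + ‖a0 ((p₁ : ℤ) - 1) (p₂ : ℤ)‖
       else
         ‖b0 (((q.1 : ℕ) : ℤ) + 1) (p₂ : ℤ)‖ +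
         ‖a0 (((q.1 : ℕ) : ℤ) + 1) (p₂ : ℤ)‖ +
         ‖a0 ((q.1 : ℕ) : ℤ) (p₂ : ℤ)‖)
    else 0) +
  (if (q.1 : ℕ) = 0 ∨ (q.1 : ℕ) = p₁ - 1 then dVec p₁ p₂ a0 a1 q.2 else 0)

/-- The diagonal matrix `C`. -/
def CMat (p₁ p₂ : ℕ) (a0 a1 b0 : ℤ → ℤ → ℂ) :
    Matrix (Fin p₁ × Fin p₂) (Fin p₁ × Fin p₂) ℂ :=
  Matrix.diagonal (fun q => (CDiag p₁ p₂ a0 a1 b0 q : ℂ))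

/-- `lam` is the nondecreasing enumeration (with multiplicities) of the eigenvalues of
the Hermitian matrix `M`. -/
def IsOrderedEigs {N : Type*} [Fintype N] [DecidableEq N] (M : Matrix N N ℂ) {k : ℕ}
    (lam : Fin k → ℝ) : Prop :=
  Monotone lam ∧ ∃ (hM : M.IsHermitian) (e : Fin k ≃ N), ∀ i, lam i = hM.eigenvalues (e i)


-- paste helpers (assume compiled, re-include)
section helpers
variable {ι : Type*}
lemma norm_sq_lp (g : lp (fun _ : ι => ℂ) 2) : ‖g‖ ^ 2 = ∑' i, ‖g i‖ ^ 2 := by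
  have h2 : (0:ℝ) < (2 : ℝ≥0∞).toReal := by norm_num
  have := lp.norm_rpow_eq_tsum h2 g
  rw [show ((2:ℝ≥0∞).toReal) = ((2:ℕ):ℝ) by norm_num] at this
  simpa [Real.rpow_natCast] using this
lemma memlp_of_bound (f : lp (fun _ : ι => ℂ) 2) (g : ι → ℂ) (C : ℝ)
    (h : ∀ i, ‖g i‖ ≤ C * ‖f i‖) : Memℓp g 2 := by
  apply memℓp_gen
  have h2 : (0:ℝ) < (2 : ℝ≥0∞).toReal := by norm_num
  have hs := ((lp.memℓp f).summable h2)
  apply Summable.of_nonneg_of_le (fun i => by positivity) (fun i => ?_) (hs.mul_left (|C|^(2:ℝ≥0∞).toReal))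
  calc ‖g i‖ ^ (2:ℝ≥0∞).toReal ≤ (|C| * ‖f i‖) ^ (2 : ℝ≥0∞).toReal := by
        apply Real.rpow_le_rpow (norm_nonneg _) ((h i).trans ?_) (by norm_num)
        exact mul_le_mul_of_nonneg_right (le_abs_self C) (norm_nonneg _)
    _ = |C|^(2:ℝ≥0∞).toReal * ‖f i‖ ^ (2:ℝ≥0∞).toReal :=
        Real.mul_rpow (abs_nonneg _) (norm_nonneg _)
lemma memlp_comp_equiv (f : lp (fun _ : ι => ℂ) 2) (e : ι ≃ ι) :
    Memℓp (fun i => f (e i)) 2 :=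
  memℓp_gen ((Equiv.summable_iff e).mpr ((lp.memℓp f).summable (by norm_num)))
lemma norm_comp_equiv (f : lp (fun _ : ι => ℂ) 2) (e : ι ≃ ι) :
    ‖(⟨fun i => f (e i), memlp_comp_equiv f e⟩ : lp (fun _ : ι => ℂ) 2)‖ = ‖f‖ := by
  have h1 := norm_sq_lp (⟨fun i => f (e i), memlp_comp_equiv f e⟩ : lp (fun _ : ι => ℂ) 2)
  have h2 := norm_sq_lp f
  have h3 : ∑' i, ‖f (e i)‖ ^ 2 = ∑' i, ‖f i‖ ^ 2 := e.tsum_eq (fun i => ‖f i‖ ^ 2)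
  have e1 : ‖(⟨fun i => f (e i), memlp_comp_equiv f e⟩ : lp (fun _ : ι => ℂ) 2)‖ ^ 2 = ‖f‖^2 := by
    rw [h1, h2]; exact h3
  have n1 := lp.norm_nonneg' (⟨fun i => f (e i), memlp_comp_equiv f e⟩ : lp (fun _ : ι => ℂ) 2)
  have n2 := lp.norm_nonneg' f
  nlinarith
lemma norm_lp_le (g : lp (fun _ : ι => ℂ) 2) (C : ℝ) (hC : 0 ≤ C)
    (h : ∑' i, ‖g i‖ ^ 2 ≤ C ^ 2) : ‖g‖ ≤ C := by
  have h1 : ‖g‖^2 ≤ C^2 := by rw [norm_sq_lp]; exact h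
  nlinarith [lp.norm_nonneg' g]
lemma summable_sq (f : lp (fun _ : ι => ℂ) 2) : Summable (fun i => ‖f i‖^2) := by
  have := (lp.memℓp f).summable (show (0:ℝ) < (2:ℝ≥0∞).toReal by norm_num)
  rw [show ((2:ℝ≥0∞).toReal) = ((2:ℕ):ℝ) by norm_num] at this
  simpa [Real.rpow_natCast] using this
end helpers

def eM : ℤ×ℤ ≃ ℤ×ℤ :=
  ⟨fun x => (x.1, x.2 - 1), fun x => (x.1, x.2 + 1), fun x => by simp, fun x => by simp⟩
def eP : ℤ×ℤ ≃ ℤ×ℤ :=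
  ⟨fun x => (x.1, x.2 + 1), fun x => (x.1, x.2 - 1), fun x => by simp, fun x => by simp⟩

lemma vbound (p₁ : ℕ) (hp₁ : 3 ≤ p₁) (n : ℤ) :
    |4 * (((n - 1) % (p₁ : ℤ) + 1 : ℤ) : ℝ) - (2*(p₁:ℝ)+2)| ≤ 2*(p₁:ℝ) - 2 := by
  have hne : ((p₁ : ℤ)) ≠ 0 := by exact_mod_cast (by omega : p₁ ≠ 0)
  have h0 : (0:ℤ) ≤ (n-1) % (p₁:ℤ) := Int.emod_nonneg _ hne
  have h1 : (n-1) % (p₁:ℤ) < (p₁:ℤ) := Int.emod_lt_of_pos _ (by exact_mod_cast (by omega : 0 < p₁))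
  have hr0 : (0:ℝ) ≤ (((n-1) % (p₁:ℤ) : ℤ) : ℝ) := by exact_mod_cast h0
  have hr1 : (((n-1) % (p₁:ℤ) : ℤ) : ℝ) ≤ (p₁:ℝ) - 1 := by
    have : (n-1) % (p₁:ℤ) ≤ (p₁:ℤ) - 1 := by omega
    exact_mod_cast this
  rw [abs_le]
  push_cast
  constructor <;> nlinarith [hr0, hr1]

lemma opbound (p₁ : ℕ) (hp₁ : 3 ≤ p₁) (𝒥 : H2 →L[ℂ] H2)
    (hJ' : ∀ (f : H2) (x : ℤ × ℤ), (𝒥 f) x =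
      f (x.1, x.2 - 1) + ((4 * (((x.1 - 1) % (p₁ : ℤ) + 1 : ℤ) : ℝ) : ℝ) : ℂ) * f x
        + f (x.1, x.2 + 1))
    (f : H2) :
    ‖(𝒥 - algebraMap ℂ (H2 →L[ℂ] H2) ((2*(p₁:ℝ)+2 : ℝ) : ℂ)) f‖ ≤ (2*(p₁:ℝ)) * ‖f‖ := by
  set c : ℝ := 2*(p₁:ℝ)+2 with hc
  set w : ℤ×ℤ → ℂ := fun x => ((4 * (((x.1 - 1) % (p₁ : ℤ) + 1 : ℤ) : ℝ) - c : ℝ) : ℂ) with hw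
  have hwb : ∀ x, ‖w x‖ ≤ 2*(p₁:ℝ) - 2 := by
    intro x
    simp only [hw, Complex.norm_real, Real.norm_eq_abs]
    exact vbound p₁ hp₁ x.1
  set G1 : H2 := ⟨fun x => f (eM x), memlp_comp_equiv f eM⟩ with hG1
  set G2 : H2 := ⟨fun x => f (eP x), memlp_comp_equiv f eP⟩ with hG2
  have memG3 : Memℓp (fun x => w x * f x) 2 := by
    apply memlp_of_bound f _ (2*(p₁:ℝ) - 2)
    intro i
    rw [norm_mul]
    exact mul_le_mul_of_nonneg_right (hwb i) (norm_nonneg _)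
  set G3 : H2 := ⟨fun x => w x * f x, memG3⟩ with hG3
  have hsplit : (𝒥 - algebraMap ℂ (H2 →L[ℂ] H2) ((c : ℝ) : ℂ)) f = G1 + G2 + G3 := by
    apply lp.ext
    funext x
    have h1 : ((𝒥 - algebraMap ℂ (H2 →L[ℂ] H2) ((c : ℝ) : ℂ)) f) x
        = (𝒥 f) x - (c:ℂ) * f x := by
      rw [ContinuousLinearMap.sub_apply, lp.coeFn_sub, Pi.sub_apply,
        Algebra.algebraMap_eq_smul_one, ContinuousLinearMap.smul_apply,
        ContinuousLinearMap.one_apply, lp.coeFn_smul, Pi.smul_apply, smul_eq_mul]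
    have h2 : (G1 + G2 + G3 : H2) x = G1 x + G2 x + G3 x := by
      rw [lp.coeFn_add, lp.coeFn_add]; rfl
    rw [h1, h2, hJ' f x]
    show _ = f (eM x) + f (eP x) + w x * f x
    simp only [eM, eP, hw, Equiv.coe_fn_mk]
    push_cast
    ring
  rw [hsplit]
  have n1 : ‖G1‖ = ‖f‖ := norm_comp_equiv f eM
  have n2 : ‖G2‖ = ‖f‖ := norm_comp_equiv f eP
  have hp3 : (3:ℝ) ≤ (p₁:ℝ) := by exact_mod_cast hp₁
  have n3 : ‖G3‖ ≤ (2*(p₁:ℝ) - 2) * ‖f‖ := by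
    apply norm_lp_le _ _ (mul_nonneg (by linarith) (norm_nonneg f))
    calc ∑' i, ‖G3 i‖ ^ 2 ≤ ∑' i, (2*(p₁:ℝ) - 2)^2 * ‖f i‖ ^ 2 := by
          apply Summable.tsum_le_tsum _ (summable_sq G3) ((summable_sq f).mul_left _)
          intro i
          show ‖w i * f i‖^2 ≤ _
          rw [norm_mul, mul_pow]
          apply mul_le_mul_of_nonneg_right _ (by positivity)
          exact pow_le_pow_left₀ (norm_nonneg _) (hwb i) 2
      _ = ((2*(p₁:ℝ) - 2) * ‖f‖)^2 := by
          rw [tsum_mul_left, ← norm_sq_lp, mul_pow]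
  calc ‖G1 + G2 + G3‖ ≤ ‖G1‖ + ‖G2‖ + ‖G3‖ := norm_add₃_le
    _ ≤ 2*(p₁:ℝ) * ‖f‖ := by rw [n1, n2]; nlinarith [norm_nonneg f]

lemma pick_interval (p : ℕ) (hp : 1 ≤ p) (t : ℝ) (h1 : 2 ≤ t) (h2 : t ≤ 4*p+2) :
    ∃ k : ℕ, k < p ∧ |t - (4*k+4)| ≤ 2 := by
  induction p with
  | zero => omega
  | succ q ih =>
    rcases Nat.eq_zero_or_pos q with hq | hq
    · subst hq
      refine ⟨0, by norm_num, ?_⟩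
      rw [abs_le]; push_cast at h2 ⊢; constructor <;> linarith
    · by_cases hc : t ≤ 4*q+2
      · obtain ⟨k, hk, hk2⟩ := ih hq hc
        exact ⟨k, by omega, hk2⟩
      · push_neg at hc
        refine ⟨q, by omega, ?_⟩
        rw [abs_le]; push_cast at h2 ⊢; constructor <;> linarith

lemma phi_rec (θ : ℝ) (s : ℝ) (hcos : Real.cos θ = s/2) (m : ℤ) :
    Complex.exp ((((m-1 : ℤ) : ℝ) * θ : ℝ) * Complex.I) +
      Complex.exp ((((m+1 : ℤ) : ℝ) * θ : ℝ) * Complex.I) =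
    (s : ℂ) * Complex.exp ((((m : ℤ) : ℝ) * θ : ℝ) * Complex.I) := by
  have key : Complex.exp (((θ:ℝ):ℂ) * Complex.I) + Complex.exp (((-θ:ℝ):ℂ) * Complex.I)
      = (s : ℂ) := by
    rw [Complex.exp_mul_I, Complex.exp_mul_I]
    push_cast
    rw [Complex.cos_neg, Complex.sin_neg, ← Complex.ofReal_cos, ← Complex.ofReal_sin]
    rw [show Real.cos θ = s/2 from hcos]
    push_cast; ring
  have e1 : ((((m-1 : ℤ) : ℝ) * θ : ℝ) : ℂ) * Complex.I
      = (((m : ℤ) : ℝ) * θ : ℝ) * Complex.I + ((-θ : ℝ) : ℂ) * Complex.I := by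
    push_cast; ring
  have e2 : ((((m+1 : ℤ) : ℝ) * θ : ℝ) : ℂ) * Complex.I
      = (((m : ℤ) : ℝ) * θ : ℝ) * Complex.I + ((θ : ℝ) : ℂ) * Complex.I := by
    push_cast; ring
  rw [e1, e2, Complex.exp_add, Complex.exp_add, ← mul_add, add_comm (Complex.exp _)]
  rw [key]; ring

example (x : ℝ) : ‖Complex.exp ((x:ℂ) * Complex.I)‖ = 1 := by
  simp [Complex.norm_exp]

set_option maxHeartbeats 2000000 in
lemma lower_spec (p₁ : ℕ) (hp₁ : 3 ≤ p₁) (𝒥 : H2 →L[ℂ] H2)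
    (hJ' : ∀ (f : H2) (x : ℤ × ℤ), (𝒥 f) x =
      f (x.1, x.2 - 1) + ((4 * (((x.1 - 1) % (p₁ : ℤ) + 1 : ℤ) : ℝ) : ℝ) : ℂ) * f x
        + f (x.1, x.2 + 1))
    (t : ℝ) (ht1 : 2 ≤ t) (ht2 : t ≤ 4*(p₁:ℝ)+2) : (t:ℂ) ∈ spectrum ℂ 𝒥 := by
  obtain ⟨k, hk, hks⟩ := pick_interval p₁ (by omega) t ht1 ht2
  set s : ℝ := t - (4*(k:ℝ)+4) with hsdef
  have hs : |s| ≤ 2 := hks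
  have hs2 : -2 ≤ s ∧ s ≤ 2 := abs_le.mp hs
  set θ : ℝ := Real.arccos (s/2) with hθ
  have hcos : Real.cos θ = s/2 := Real.cos_arccos (by linarith [hs2.1]) (by linarith [hs2.2])
  set φ : ℤ → ℂ := fun m => Complex.exp ((((m : ℤ) : ℝ) * θ : ℝ) * Complex.I) with hφ
  have hφ1 : ∀ m, ‖φ m‖ = 1 := by
    intro m; simp [hφ, Complex.norm_exp]
  have hrec : ∀ m : ℤ, φ (m-1) + φ (m+1) = (s:ℂ) * φ m := fun m => phi_rec θ s hcos m
  set n : ℤ := (k:ℤ) + 1 with hn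
  have hv : (4 * (((n - 1) % (p₁ : ℤ) + 1 : ℤ) : ℝ) : ℝ) = 4*(k:ℝ)+4 := by
    have h1 : (n - 1) % (p₁ : ℤ) = (k : ℤ) := by
      rw [hn]
      simp only [add_sub_cancel_right]
      exact Int.emod_eq_of_lt (by positivity) (by exact_mod_cast hk)
    rw [h1]; push_cast; ring
  by_contra hcon
  rw [spectrum.notMem_iff] at hcon
  obtain ⟨u, hu⟩ := hcon
  set A : H2 →L[ℂ] H2 := algebraMap ℂ (H2 →L[ℂ] H2) (t:ℂ) - 𝒥 with hA
  have hinv : ∀ g : H2, ‖g‖ ≤ ‖((u⁻¹ : (H2 →L[ℂ] H2)ˣ) : H2 →L[ℂ] H2)‖ * ‖A g‖ := by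
    intro g
    have hg : ((u⁻¹ : (H2 →L[ℂ] H2)ˣ) : H2 →L[ℂ] H2) (A g) = g := by
      have h1 : ((u⁻¹ : (H2 →L[ℂ] H2)ˣ) : H2 →L[ℂ] H2) * A = 1 := by
        rw [← hu]; exact u.inv_mul
      have := congrFun (congrArg (DFunLike.coe) h1) g
      simpa [ContinuousLinearMap.mul_apply] using this
    calc ‖g‖ = ‖((u⁻¹ : (H2 →L[ℂ] H2)ˣ) : H2 →L[ℂ] H2) (A g)‖ := by rw [hg]
      _ ≤ _ := ContinuousLinearMap.le_opNorm _ _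
  set C : ℝ := ‖((u⁻¹ : (H2 →L[ℂ] H2)ˣ) : H2 →L[ℂ] H2)‖ with hC
  have hCnn : 0 ≤ C := norm_nonneg _
  set N : ℕ := ⌈(8*C)^2⌉₊ + 1 with hN
  have hNbig : (8*C)^2 < 2*(N:ℝ)+1 := by
    have h1 : (8*C)^2 ≤ (⌈(8*C)^2⌉₊ : ℝ) := Nat.le_ceil _
    have h2 : ((⌈(8*C)^2⌉₊ : ℕ) : ℝ) < 2*(N:ℝ)+1 := by
      rw [hN]; push_cast; linarith
    linarith
  set fN : ℤ×ℤ → ℂ := fun x =>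
    if x.1 = n ∧ -(N:ℤ) ≤ x.2 ∧ x.2 ≤ (N:ℤ) then φ x.2 else 0 with hfN
  have hfNval : ∀ a b : ℤ, fN (a, b) =
      if a = n ∧ -(N:ℤ) ≤ b ∧ b ≤ (N:ℤ) then φ b else 0 := fun a b => rfl
  have hfN1 : ∀ y : ℤ×ℤ, ‖fN y‖ ≤ 1 := by
    intro y
    obtain ⟨a, b⟩ := y
    rw [hfNval]
    split
    · rw [hφ1]
    · simp
  set sN : Finset (ℤ×ℤ) := {n} ×ˢ Finset.Icc (-(N:ℤ)) (N:ℤ) with hsN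
  have hsupp : ∀ x ∉ sN, fN x = 0 := by
    intro x hx
    obtain ⟨a, b⟩ := x
    rw [hfNval, if_neg]
    intro hcond
    apply hx
    rw [hsN, Finset.mem_product, Finset.mem_singleton, Finset.mem_Icc]
    exact ⟨hcond.1, hcond.2.1, hcond.2.2⟩
  have memfN : Memℓp fN 2 := by
    apply memℓp_gen
    apply summable_of_ne_finset_zero (s := sN)
    intro x hx
    rw [hsupp x hx, norm_zero]
    exact Real.zero_rpow (by norm_num)
  set F : H2 := ⟨fN, memfN⟩ with hF
  have hFcoe : ∀ x, (F : ℤ×ℤ → ℂ) x = fN x := fun x => rfl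
  have hFsq : ‖F‖^2 = 2*(N:ℝ)+1 := by
    rw [norm_sq_lp F]
    rw [tsum_eq_sum (s := sN) (fun x hx => by rw [hFcoe x, hsupp x hx]; simp)]
    have hterm : ∀ x ∈ sN, ‖(F : ℤ×ℤ → ℂ) x‖^2 = 1 := by
      intro x hx
      rw [hsN, Finset.mem_product, Finset.mem_singleton, Finset.mem_Icc] at hx
      obtain ⟨a, b⟩ := x
      rw [hFcoe, hfNval, if_pos ⟨hx.1, hx.2.1, hx.2.2⟩, hφ1]
      norm_num
    rw [Finset.sum_congr rfl hterm, Finset.sum_const, Finset.card_product,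
      Finset.card_singleton, Int.card_Icc, one_mul]
    have hca : ((N:ℤ) + 1 - -(N:ℤ)).toNat = 2*N+1 := by omega
    rw [hca]
    push_cast
    ring
  have hsc : ((s:ℝ):ℂ) = (t:ℂ) - ((4*(k:ℝ)+4 : ℝ):ℂ) := by
    rw [hsdef]; push_cast; ring
  have hAF : ∀ a b : ℤ, (A F : ℤ×ℤ → ℂ) (a, b) =
      (t:ℂ) * fN (a, b) - (fN (a, b - 1)
        + ((4 * (((a - 1) % (p₁ : ℤ) + 1 : ℤ) : ℝ) : ℝ) : ℂ) * fN (a, b) + fN (a, b + 1)) := by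
    intro a b
    rw [hA, ContinuousLinearMap.sub_apply, lp.coeFn_sub, Pi.sub_apply,
      Algebra.algebraMap_eq_smul_one, ContinuousLinearMap.smul_apply,
      ContinuousLinearMap.one_apply, lp.coeFn_smul, Pi.smul_apply, smul_eq_mul,
      hJ' F (a, b)]
  set s4 : Finset (ℤ×ℤ) := {n} ×ˢ ({-(N:ℤ)-1, -(N:ℤ), (N:ℤ), (N:ℤ)+1} : Finset ℤ) with hs4
  have hzero : ∀ x ∉ s4, (A F : ℤ×ℤ → ℂ) x = 0 := by
    intro x hx
    obtain ⟨a, b⟩ := x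
    rw [hAF a b]
    by_cases hx1 : a = n
    · have hx2 : b ≠ -(N:ℤ)-1 ∧ b ≠ -(N:ℤ) ∧ b ≠ (N:ℤ) ∧ b ≠ (N:ℤ)+1 := by
        by_contra hc
        apply hx
        rw [hs4, Finset.mem_product, Finset.mem_singleton]
        refine ⟨hx1, ?_⟩
        simp only [Finset.mem_insert, Finset.mem_singleton]
        omega
      obtain ⟨h1, h2, h3, h4⟩ := hx2
      rcases le_or_gt b ((N:ℤ)-1) with hcase | hcase
      · rcases le_or_gt (-(N:ℤ)+1) b with hin | hout
        · rw [hfNval, hfNval, hfNval,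
            if_pos ⟨hx1, by omega, by omega⟩, if_pos ⟨hx1, by omega, by omega⟩,
            if_pos ⟨hx1, by omega, by omega⟩, hx1, hv]
          have hrec' := hrec b
          linear_combination (-(φ b)) * hsc - hrec'
        · rw [hfNval, hfNval, hfNval, if_neg (by omega), if_neg (by omega),
            if_neg (by omega)]
          ring
      · rw [hfNval, hfNval, hfNval, if_neg (by omega), if_neg (by omega),
          if_neg (by omega)]
        ring
    · rw [hfNval, hfNval, hfNval, if_neg (fun h => hx1 h.1), if_neg (fun h => hx1 h.1),
        if_neg (fun h => hx1 h.1)]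
      ring
  have hbound : ∀ x ∈ s4, ‖(A F : ℤ×ℤ → ℂ) x‖^2 ≤ 16 := by
    intro x hx
    obtain ⟨a, b⟩ := x
    rw [hs4, Finset.mem_product, Finset.mem_singleton] at hx
    obtain ⟨hx1, -⟩ := hx
    have hx1' : a = n := hx1
    rw [hAF a b, hx1', hv]
    have hexp : (t:ℂ) * fN (n, b) - (fN (n, b - 1)
        + ((4*(k:ℝ)+4 : ℝ):ℂ) * fN (n, b) + fN (n, b + 1))
        = ((s:ℝ):ℂ) * fN (n, b) - fN (n, b - 1) - fN (n, b + 1) := by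
      linear_combination (-(fN (n, b))) * hsc
    rw [hexp]
    have hb4 : ‖((s:ℝ):ℂ) * fN (n, b) - fN (n, b - 1) - fN (n, b + 1)‖ ≤ 4 := by
      have e1 : ‖((s:ℝ):ℂ) * fN (n, b) - fN (n, b - 1) - fN (n, b + 1)‖
          ≤ ‖((s:ℝ):ℂ) * fN (n, b) - fN (n, b - 1)‖ + ‖fN (n, b + 1)‖ := norm_sub_le _ _
      have e2 : ‖((s:ℝ):ℂ) * fN (n, b) - fN (n, b - 1)‖
          ≤ ‖((s:ℝ):ℂ) * fN (n, b)‖ + ‖fN (n, b - 1)‖ := norm_sub_le _ _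
      have e3 : ‖((s:ℝ):ℂ) * fN (n, b)‖ ≤ 2 := by
        rw [norm_mul, Complex.norm_real, Real.norm_eq_abs]
        calc |s| * ‖fN (n, b)‖ ≤ 2 * 1 :=
          mul_le_mul hs (hfN1 (n, b)) (norm_nonneg _) (by norm_num)
        _ = 2 := by norm_num
      linarith [hfN1 (n, b - 1), hfN1 (n, b + 1)]
    nlinarith [norm_nonneg (((s:ℝ):ℂ) * fN (n, b) - fN (n, b - 1) - fN (n, b + 1))]
  have hAFsq : ‖A F‖^2 ≤ 64 := by
    rw [norm_sq_lp]
    rw [tsum_eq_sum (s := s4) (fun x hx => by rw [hzero x hx]; simp)]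
    have hcard : s4.card ≤ 4 := by
      rw [hs4, Finset.card_product, Finset.card_singleton, one_mul]
      have c1 := Finset.card_insert_le (-(N:ℤ)-1) ({-(N:ℤ), (N:ℤ), (N:ℤ)+1} : Finset ℤ)
      have c2 := Finset.card_insert_le (-(N:ℤ)) ({(N:ℤ), (N:ℤ)+1} : Finset ℤ)
      have c3 := Finset.card_insert_le ((N:ℤ)) ({(N:ℤ)+1} : Finset ℤ)
      have c4 : ({(N:ℤ)+1} : Finset ℤ).card = 1 := Finset.card_singleton _
      omega
    calc ∑ x ∈ s4, ‖(A F : ℤ×ℤ → ℂ) x‖^2 ≤ s4.card • (16:ℝ) :=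
        Finset.sum_le_card_nsmul _ _ _ hbound
      _ = (s4.card : ℝ) * 16 := by rw [nsmul_eq_mul]
      _ ≤ 4 * 16 := by
          apply mul_le_mul_of_nonneg_right _ (by norm_num)
          exact_mod_cast hcard
      _ = 64 := by norm_num
  have h1 : ‖F‖ ≤ C * ‖A F‖ := hinv F
  have h2 : ‖F‖^2 ≤ C^2 * ‖A F‖^2 := by nlinarith [norm_nonneg (A F), norm_nonneg F]
  rw [hFsq] at h2
  nlinarith [sq_nonneg C]


instance : Nontrivial H2 := by
  refine ⟨lp.single 2 ((0,0) : ℤ×ℤ) (1:ℂ), 0, fun h => ?_⟩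
  have : (lp.single (E := fun _ : ℤ×ℤ => ℂ) 2 ((0,0):ℤ×ℤ) (1:ℂ)) (0,0) = (0 : H2) (0,0) := by
    rw [h]
  rw [lp.single_apply_self] at this
  simp at this

lemma union_Icc (p : ℕ) (hp : 1 ≤ p) :
    (⋃ n ∈ Finset.range p, Set.Icc (4 * ((n : ℝ) + 1) - 2) (4 * ((n : ℝ) + 1) + 2))
      = Set.Icc (2:ℝ) (4*(p:ℝ)+2) := by
  ext t
  simp only [Set.mem_iUnion, Set.mem_Icc, Finset.mem_range, exists_prop]
  constructor
  · rintro ⟨j, hj, hj1, hj2⟩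
    have hjr : (j:ℝ) + 1 ≤ p := by exact_mod_cast hj
    constructor <;> linarith
  · rintro ⟨h1, h2⟩
    obtain ⟨k, hk, hks⟩ := pick_interval p hp t h1 h2
    refine ⟨k, hk, ?_⟩
    rw [abs_le] at hks
    constructor <;> linarith [hks.1, hks.2]

lemma upper_spec (p₁ : ℕ) (hp₁ : 3 ≤ p₁) (𝒥 : H2 →L[ℂ] H2)
    (hop : ∀ f : H2, ‖(𝒥 - algebraMap ℂ (H2 →L[ℂ] H2) ((2*(p₁:ℝ)+2 : ℝ) : ℂ)) f‖
      ≤ (2*(p₁:ℝ)) * ‖f‖)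
    (t : ℝ) (ht : (t:ℂ) ∈ spectrum ℂ 𝒥) : 2 ≤ t ∧ t ≤ 4*(p₁:ℝ)+2 := by
  have hmem : (t:ℂ) - ((2*(p₁:ℝ)+2 : ℝ):ℂ)
      ∈ spectrum ℂ (𝒥 - algebraMap ℂ (H2 →L[ℂ] H2) ((2*(p₁:ℝ)+2 : ℝ):ℂ)) := by
    rw [spectrum.mem_iff] at ht ⊢
    convert ht using 2
    rw [map_sub, sub_sub_sub_cancel_right]
  have hnorm := spectrum.norm_le_norm_of_mem hmem
  have hopn : ‖𝒥 - algebraMap ℂ (H2 →L[ℂ] H2) ((2*(p₁:ℝ)+2 : ℝ):ℂ)‖ ≤ 2*(p₁:ℝ) :=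
    ContinuousLinearMap.opNorm_le_bound _ (by positivity) hop
  have he : ‖(t:ℂ) - ((2*(p₁:ℝ)+2:ℝ):ℂ)‖ = |t - (2*(p₁:ℝ)+2)| := by
    rw [show (t:ℂ) - ((2*(p₁:ℝ)+2:ℝ):ℂ) = ((t - (2*(p₁:ℝ)+2) : ℝ):ℂ) by push_cast; ring,
      Complex.norm_real, Real.norm_eq_abs]
  rw [he] at hnorm
  have habs := abs_le.mp (hnorm.trans hopn)
  constructor <;> linarith [habs.1, habs.2]

/-- Example 1: if `a⁰ = a¹ = 0`, `b⁰ = 1` and `b¹_{n,m} = 4ñ` where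
`ñ ∈ {1,…,p₁}` is the representative of `n` modulo `p₁` (so `Aₙ = 0` and
`Bₙ = S + S⁻¹ + 4ñ·I`), then `σ(𝒥) = ⋃_{n=1}^{p₁}[4n−2, 4n+2] = [2, 4p₁+2]`; in
particular `mes(σ(𝒥)) = 4p₁`, so the estimate
`mes(σ(𝒥)) ≤ 4 min_β Σ_{n=1}^{p₁}|b⁰_{n,β}| + 4 min_α Σ_{m=1}^{p₂}|a¹_{α,m}| = 4p₁`
is attained with equality. -/
theorem example_one_sharp (p₁ p₂ : ℕ) (hp₁ : 3 ≤ p₁) (hp₂ : 3 ≤ p₂)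
    (a0 a1 b0 : ℤ → ℤ → ℂ) (b1 : ℤ → ℤ → ℝ)
    (ha0 : Periodic2 p₁ p₂ a0) (ha1 : Periodic2 p₁ p₂ a1)
    (hb0 : Periodic2 p₁ p₂ b0) (hb1 : Periodic2 p₁ p₂ b1)
    (hva0 : ∀ n m : ℤ, a0 n m = 0) (hva1 : ∀ n m : ℤ, a1 n m = 0)
    (hvb0 : ∀ n m : ℤ, b0 n m = 1)
    (hvb1 : ∀ n m : ℤ, b1 n m = 4 * (((n - 1) % (p₁ : ℤ) + 1 : ℤ) : ℝ))
    (𝒥 : H2 →L[ℂ] H2) (h𝒥 : IsJacobi2D a0 a1 b0 b1 𝒥) (hsa : IsSelfAdjoint 𝒥) :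
    {t : ℝ | (t : ℂ) ∈ spectrum ℂ 𝒥} =
      (⋃ n ∈ Finset.range p₁, Set.Icc (4 * ((n : ℝ) + 1) - 2) (4 * ((n : ℝ) + 1) + 2)) ∧
    {t : ℝ | (t : ℂ) ∈ spectrum ℂ 𝒥} = Set.Icc (2 : ℝ) (4 * (p₁ : ℝ) + 2) ∧
    MeasureTheory.volume {t : ℝ | (t : ℂ) ∈ spectrum ℂ 𝒥} = ENNReal.ofReal (4 * (p₁ : ℝ)) ∧
    (∀ α β : ℤ,
      4 * ∑ n ∈ Finset.range p₁, ‖b0 ((n : ℤ) + 1) β‖ +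
      4 * ∑ m ∈ Finset.range p₂, ‖a1 α ((m : ℤ) + 1)‖ = 4 * (p₁ : ℝ)) := by
  have hJ' : ∀ (f : H2) (x : ℤ × ℤ), (𝒥 f) x =
      f (x.1, x.2 - 1) + ((4 * (((x.1 - 1) % (p₁ : ℤ) + 1 : ℤ) : ℝ) : ℝ) : ℂ) * f x
        + f (x.1, x.2 + 1) := by
    intro f x
    obtain ⟨n, m⟩ := x
    rw [h𝒥 f n m]
    simp [hva0, hva1, hvb0, hvb1]
  have hset : {t : ℝ | (t : ℂ) ∈ spectrum ℂ 𝒥} = Set.Icc (2:ℝ) (4*(p₁:ℝ)+2) := by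
    ext t
    simp only [Set.mem_setOf_eq, Set.mem_Icc]
    constructor
    · exact fun ht => upper_spec p₁ hp₁ 𝒥 (opbound p₁ hp₁ 𝒥 hJ') t ht
    · exact fun ht => lower_spec p₁ hp₁ 𝒥 hJ' t ht.1 ht.2
  refine ⟨?_, ?_, ?_, ?_⟩
  · rw [hset, union_Icc p₁ (by omega)]
  · exact hset
  · rw [hset, Real.volume_Icc]
    congr 1
    ring
  · intro α β
    simp only [hvb0, hva1, map_one, map_zero, norm_one, norm_zero, Finset.sum_const, Finset.card_range,
      nsmul_eq_mul, mul_one, Finset.sum_const_zero, mul_zero, add_zero]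
end
end

section
/- Suppose a⁰_{n,m} = 0, a¹_{n,m} = 1, b⁰_{n,m} = 0, and b¹_{n,m} = 4·(m mod p₂) for all (n,m) ∈ ℤ², where m mod p₂ ∈ {0,1,…,p₂−1} (so every Aₙ is the identity operator and every Bₙ = diag(4m mod 4p₂)_{m∈ℤ}). Then the Lebesgue measure of the spectrum of the 2D periodic Jacobi operator 𝒥 equals 4p₂: mes(σ(𝒥)) = 4p₂, so the estimate mes(σ(𝒥)) ≤ 4 min_β Σ_{n=1}^{p₁}|b⁰_{n,β}| + 4 min_α Σ_{m=1}^{p₂}|a¹_{α,m}| = 4p₂ is attained with equality. -/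
open scoped ComplexConjugate Matrix ENNReal

noncomputable section

section JacobiAuxSec
open scoped ENNReal

namespace JacobiAux

variable {ι : Type*}

lemma tR2 : (2 : ℝ≥0∞).toReal = 2 := by norm_num

lemma rpow_two_eq (x : ℝ) : x ^ (2 : ℝ) = x ^ (2 : ℕ) := by
  rw [show (2:ℝ) = ((2:ℕ):ℝ) by norm_num, Real.rpow_natCast]

lemma memℓp_two {f : ι → ℂ} (h : Summable fun i => ‖f i‖ ^ (2 : ℝ)) :
    Memℓp f 2 :=
  memℓp_gen (by simpa only [tR2] using h)

lemma summable_sq (f : lp (fun _ : ι => ℂ) 2) :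
    Summable fun i => ‖f i‖ ^ (2 : ℝ) := by
  simpa only [tR2] using (lp.memℓp f).summable (p := 2) (by rw [tR2]; norm_num)

lemma norm_sq (f : lp (fun _ : ι => ℂ) 2) :
    ‖f‖ ^ (2 : ℝ) = ∑' i, ‖f i‖ ^ (2 : ℝ) := by
  simpa only [tR2] using lp.norm_rpow_eq_tsum (p := 2) (by rw [tR2]; norm_num) f

lemma norm_le (f : lp (fun _ : ι => ℂ) 2) {C : ℝ} (hC : 0 ≤ C)
    (h : ∑' i, ‖f i‖ ^ (2 : ℝ) ≤ C ^ (2 : ℝ)) : ‖f‖ ≤ C :=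
  lp.norm_le_of_tsum_le (p := 2) (by rw [tR2]; norm_num) hC (by simpa only [tR2] using h)

noncomputable def shiftLM (e : ι ≃ ι) : lp (fun _ : ι => ℂ) 2 →ₗ[ℂ] lp (fun _ : ι => ℂ) 2 where
  toFun f := ⟨fun i => f (e i), memℓp_two (e.summable_iff.2 (summable_sq f))⟩
  map_add' f g := rfl
  map_smul' c f := rfl

lemma shiftLM_norm (e : ι ≃ ι) (f : lp (fun _ : ι => ℂ) 2) : ‖shiftLM e f‖ ≤ 1 * ‖f‖ := by
  rw [one_mul]
  refine norm_le _ (norm_nonneg _) ?_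
  rw [norm_sq f]
  exact le_of_eq (e.tsum_eq fun i => ‖f i‖ ^ (2:ℝ))

noncomputable def shiftOp (e : ι ≃ ι) : lp (fun _ : ι => ℂ) 2 →L[ℂ] lp (fun _ : ι => ℂ) 2 :=
  LinearMap.mkContinuous (shiftLM e) 1 (shiftLM_norm e)

lemma shiftOp_apply (e : ι ≃ ι) (f : lp (fun _ : ι => ℂ) 2) (i : ι) :
    shiftOp e f i = f (e i) := rfl

lemma shiftOp_norm (e : ι ≃ ι) : ‖shiftOp e‖ ≤ 1 :=
  LinearMap.mkContinuous_norm_le _ zero_le_one _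

lemma mult_term_le {w : ι → ℂ} {C : ℝ} (hC : 0 ≤ C) (hw : ∀ i, ‖w i‖ ≤ C)
    (f : ι → ℂ) (i : ι) :
    ‖w i * f i‖ ^ (2:ℝ) ≤ C ^ (2:ℝ) * ‖f i‖ ^ (2:ℝ) := by
  rw [← Real.mul_rpow hC (norm_nonneg _), norm_mul]
  exact Real.rpow_le_rpow (by positivity) (by gcongr; exact hw i) (by norm_num)

lemma mult_summable {w : ι → ℂ} {C : ℝ} (hC : 0 ≤ C) (hw : ∀ i, ‖w i‖ ≤ C)
    (f : lp (fun _ : ι => ℂ) 2) :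
    Summable fun i => ‖w i * f i‖ ^ (2:ℝ) :=
  Summable.of_nonneg_of_le (fun i => by positivity) (fun i => mult_term_le hC hw (⇑f) i)
    ((summable_sq f).mul_left (C ^ (2:ℝ)))

noncomputable def multLM (w : ι → ℂ) {C : ℝ} (hC : 0 ≤ C) (hw : ∀ i, ‖w i‖ ≤ C) :
    lp (fun _ : ι => ℂ) 2 →ₗ[ℂ] lp (fun _ : ι => ℂ) 2 where
  toFun f := ⟨fun i => w i * f i, memℓp_two (mult_summable hC hw f)⟩
  map_add' f g := by ext i; exact mul_add _ _ _
  map_smul' c f := by ext i; exact mul_left_comm _ _ _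

lemma multLM_norm (w : ι → ℂ) {C : ℝ} (hC : 0 ≤ C) (hw : ∀ i, ‖w i‖ ≤ C)
    (f : lp (fun _ : ι => ℂ) 2) : ‖multLM w hC hw f‖ ≤ C * ‖f‖ := by
  refine norm_le _ (by positivity) ?_
  rw [Real.mul_rpow hC (norm_nonneg _), norm_sq f, ← tsum_mul_left]
  exact Summable.tsum_le_tsum (fun i => mult_term_le hC hw (⇑f) i) (mult_summable hC hw f)
    ((summable_sq f).mul_left _)

noncomputable def multOp (w : ι → ℂ) {C : ℝ} (hC : 0 ≤ C) (hw : ∀ i, ‖w i‖ ≤ C) :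
    lp (fun _ : ι => ℂ) 2 →L[ℂ] lp (fun _ : ι => ℂ) 2 :=
  LinearMap.mkContinuous (multLM w hC hw) C (multLM_norm w hC hw)

lemma multOp_apply (w : ι → ℂ) {C : ℝ} (hC : 0 ≤ C) (hw : ∀ i, ‖w i‖ ≤ C)
    (f : lp (fun _ : ι => ℂ) 2) (i : ι) : multOp w hC hw f i = w i * f i := rfl

lemma multOp_norm (w : ι → ℂ) {C : ℝ} (hC : 0 ≤ C) (hw : ∀ i, ‖w i‖ ≤ C) :
    ‖multOp w hC hw‖ ≤ C :=
  LinearMap.mkContinuous_norm_le _ hC _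

lemma sum_single_apply [DecidableEq ι] (s : Finset ι) (F : ι → ℂ) (j : ι) :
    (∑ i ∈ s, lp.single 2 i (F i) : lp (fun _ : ι => ℂ) 2) j
      = if j ∈ s then F j else 0 := by
  rw [lp.coeFn_sum, Finset.sum_apply]
  simp only [lp.single_apply, Pi.single_apply, eq_rec_constant, dite_eq_ite, Finset.sum_ite_eq]

lemma norm_sum_single_sq [DecidableEq ι] (s : Finset ι) (F : ι → ℂ) :
    ‖∑ i ∈ s, lp.single 2 i (F i)‖ ^ (2:ℝ) = ∑ i ∈ s, ‖F i‖ ^ (2:ℝ) := by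
  simpa only [tR2] using lp.norm_sum_single (p := 2) (by rw [tR2]; norm_num) F s

end JacobiAux

end JacobiAuxSec

set_option maxHeartbeats 2000000 in
/-- Example 2: if `a⁰ = 0`, `a¹ = 1`, `b⁰ = 0` and
`b¹_{n,m} = 4·(m mod p₂)` with `m mod p₂ ∈ {0,…,p₂−1}` (so every `Aₙ` is the identity and
every `Bₙ = diag(4m mod 4p₂)`), then `mes(σ(𝒥)) = 4p₂`, so the estimate
`mes(σ(𝒥)) ≤ 4 min_β Σ_{n=1}^{p₁}|b⁰_{n,β}| + 4 min_α Σ_{m=1}^{p₂}|a¹_{α,m}| = 4p₂`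
is attained with equality. -/
theorem example_two_sharp (p₁ p₂ : ℕ) (hp₁ : 3 ≤ p₁) (hp₂ : 3 ≤ p₂)
    (a0 a1 b0 : ℤ → ℤ → ℂ) (b1 : ℤ → ℤ → ℝ)
    (ha0 : Periodic2 p₁ p₂ a0) (ha1 : Periodic2 p₁ p₂ a1)
    (hb0 : Periodic2 p₁ p₂ b0) (hb1 : Periodic2 p₁ p₂ b1)
    (hva0 : ∀ n m : ℤ, a0 n m = 0) (hva1 : ∀ n m : ℤ, a1 n m = 1)
    (hvb0 : ∀ n m : ℤ, b0 n m = 0)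
    (hvb1 : ∀ n m : ℤ, b1 n m = 4 * ((m % (p₂ : ℤ) : ℤ) : ℝ))
    (𝒥 : H2 →L[ℂ] H2) (h𝒥 : IsJacobi2D a0 a1 b0 b1 𝒥) (hsa : IsSelfAdjoint 𝒥) :
    MeasureTheory.volume {t : ℝ | (t : ℂ) ∈ spectrum ℂ 𝒥} = ENNReal.ofReal (4 * (p₂ : ℝ)) ∧
    (∀ α β : ℤ,
      4 * ∑ n ∈ Finset.range p₁, ‖b0 ((n : ℤ) + 1) β‖ +
      4 * ∑ m ∈ Finset.range p₂, ‖a1 α ((m : ℤ) + 1)‖ = 4 * (p₂ : ℝ)) := by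
  classical
  have hp₂R : (3:ℝ) ≤ (p₂:ℝ) := by exact_mod_cast hp₂
  have hp₂pos : (0:ℤ) < (p₂:ℤ) := by exact_mod_cast Nat.lt_of_lt_of_le (by norm_num) hp₂
  haveI : Nontrivial H2 := by
    refine ⟨lp.single 2 ((0:ℤ),(0:ℤ)) (1:ℂ), 0, fun h => one_ne_zero (α := ℂ) ?_⟩
    have h0 := congrArg (fun x : H2 => x ((0:ℤ),(0:ℤ))) h
    simpa [lp.single_apply_self] using h0
  have hJ' : ∀ (f : H2) (n m : ℤ), (𝒥 f) (n, m) =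
      f (n+1, m) + f (n-1, m) + ((b1 n m : ℝ) : ℂ) * f (n, m) := by
    intro f n m
    rw [h𝒥 f n m]
    simp only [hva0, hva1, hvb0, map_zero, map_one, zero_mul, one_mul, add_zero, zero_add]
    ring
  -- upper bound
  have hupper : ∀ t : ℝ, (t:ℂ) ∈ spectrum ℂ 𝒥 → t ∈ Set.Icc (-2:ℝ) (4*(p₂:ℝ)-2) := by
    have hC2 : (0:ℝ) ≤ 2*(p₂:ℝ) - 2 := by linarith
    set e1 : ℤ × ℤ ≃ ℤ × ℤ :=
      { toFun := fun q => (q.1 + 1, q.2)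
        invFun := fun q => (q.1 - 1, q.2)
        left_inv := fun q => by simp
        right_inv := fun q => by simp } with he1
    set w : ℤ × ℤ → ℂ :=
      fun q => ((4 * ((q.2 % (p₂:ℤ) : ℤ) : ℝ) - (2*(p₂:ℝ) - 2) : ℝ) : ℂ) with hwdef
    have hwb : ∀ q : ℤ × ℤ, ‖w q‖ ≤ 2*(p₂:ℝ) - 2 := by
      intro q
      have h0 : (0:ℤ) ≤ q.2 % (p₂:ℤ) := Int.emod_nonneg _ (by omega)
      have h1 : q.2 % (p₂:ℤ) ≤ (p₂:ℤ) - 1 := by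
        have := Int.emod_lt_of_pos q.2 hp₂pos; omega
      have h0R : (0:ℝ) ≤ ((q.2 % (p₂:ℤ) : ℤ) : ℝ) := by exact_mod_cast h0
      have h1R : ((q.2 % (p₂:ℤ) : ℤ) : ℝ) ≤ (p₂:ℝ) - 1 := by
        have : ((q.2 % (p₂:ℤ) : ℤ) : ℝ) ≤ (((p₂:ℤ) - 1 : ℤ) : ℝ) := by exact_mod_cast h1
        push_cast at this; linarith
      rw [hwdef]
      simp only [Complex.norm_real, Real.norm_eq_abs]
      rw [abs_le]
      constructor <;> linarith
    set K := JacobiAux.shiftOp e1 + JacobiAux.shiftOp e1.symm +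
      JacobiAux.multOp w hC2 hwb with hKdef
    have hJK : 𝒥 - algebraMap ℂ (H2 →L[ℂ] H2) ((2*(p₂:ℝ)-2 : ℝ) : ℂ) = K := by
      refine ContinuousLinearMap.ext fun f => ?_
      refine lp.ext (funext fun q => ?_)
      obtain ⟨n, m⟩ := q
      have hL : ((𝒥 - algebraMap ℂ (H2 →L[ℂ] H2) ((2*(p₂:ℝ)-2 : ℝ) : ℂ)) f) (n, m)
          = (𝒥 f) (n, m) - ((2*(p₂:ℝ)-2 : ℝ) : ℂ) * f (n, m) := by
        rw [ContinuousLinearMap.sub_apply, lp.coeFn_sub, Pi.sub_apply,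
          Algebra.algebraMap_eq_smul_one, ContinuousLinearMap.smul_apply,
          ContinuousLinearMap.one_apply, lp.coeFn_smul, Pi.smul_apply, smul_eq_mul]
      have hR : (K f) (n, m) = f (n+1, m) + f (n-1, m) + w (n, m) * f (n, m) := by
        rw [hKdef, ContinuousLinearMap.add_apply, ContinuousLinearMap.add_apply,
          lp.coeFn_add, Pi.add_apply, lp.coeFn_add, Pi.add_apply,
          JacobiAux.shiftOp_apply, JacobiAux.shiftOp_apply, JacobiAux.multOp_apply]
        rfl
      rw [hL, hR, hJ' f n m, hvb1, hwdef]
      push_cast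
      ring
    have hKnorm : ‖𝒥 - algebraMap ℂ (H2 →L[ℂ] H2) ((2*(p₂:ℝ)-2 : ℝ) : ℂ)‖ ≤ 2*(p₂:ℝ) := by
      rw [hJK, hKdef]
      calc ‖JacobiAux.shiftOp e1 + JacobiAux.shiftOp e1.symm + JacobiAux.multOp w hC2 hwb‖
          ≤ ‖JacobiAux.shiftOp e1 + JacobiAux.shiftOp e1.symm‖ + ‖JacobiAux.multOp w hC2 hwb‖ :=
            norm_add_le _ _
        _ ≤ (‖JacobiAux.shiftOp e1‖ + ‖JacobiAux.shiftOp e1.symm‖) + ‖JacobiAux.multOp w hC2 hwb‖ := by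
            gcongr; exact norm_add_le _ _
        _ ≤ (1 + 1) + (2*(p₂:ℝ) - 2) := by
            gcongr
            · exact JacobiAux.shiftOp_norm e1
            · exact JacobiAux.shiftOp_norm e1.symm
            · exact JacobiAux.multOp_norm w hC2 hwb
        _ = 2*(p₂:ℝ) := by ring
    intro t ht
    have hmem : (t:ℂ) - ((2*(p₂:ℝ)-2 : ℝ) : ℂ) ∈
        spectrum ℂ (𝒥 - algebraMap ℂ (H2 →L[ℂ] H2) ((2*(p₂:ℝ)-2 : ℝ) : ℂ)) := by
      rw [← spectrum.sub_singleton_eq]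
      exact Set.sub_mem_sub ht rfl
    have hb := (spectrum.norm_le_norm_of_mem hmem).trans hKnorm
    rw [← Complex.ofReal_sub, Complex.norm_real, Real.norm_eq_abs, abs_le] at hb
    constructor <;> [linarith [hb.1]; linarith [hb.2]]
  -- lower bound
  have hlower : ∀ t : ℝ, t ∈ Set.Icc (-2:ℝ) (4*(p₂:ℝ)-2) → (t:ℂ) ∈ spectrum ℂ 𝒥 := by
    intro t ht
    obtain ⟨ht1, ht2⟩ := ht
    by_contra hts
    rw [spectrum.mem_iff, not_not] at hts
    obtain ⟨u, hu⟩ := hts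
    -- choose the band index r
    obtain ⟨r, hrlt, hrabs⟩ : ∃ r : ℕ, r < p₂ ∧ |t - 4*(r:ℝ)| ≤ 2 := by
      set k : ℤ := ⌊(t+2)/4⌋ with hk
      have hk1 : ((k:ℤ):ℝ) ≤ (t+2)/4 := Int.floor_le _
      have hk2 : (t+2)/4 < k + 1 := Int.lt_floor_add_one _
      have hk0 : (0:ℤ) ≤ k := by
        have : (0:ℝ) ≤ (t+2)/4 := by linarith
        exact_mod_cast Int.le_floor.2 (by simpa using this)
      have hkle : k ≤ (p₂:ℤ) := by
        have : ((k:ℤ):ℝ) ≤ (p₂:ℝ) := by linarith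
        exact_mod_cast this
      by_cases hcase : k ≤ (p₂:ℤ) - 1
      · refine ⟨k.toNat, ?_, ?_⟩
        · omega
        · have hcast : ((k.toNat : ℕ) : ℝ) = ((k:ℤ):ℝ) := by
            exact_mod_cast congrArg (fun z : ℤ => (z:ℝ)) (Int.toNat_of_nonneg hk0)
          rw [hcast, abs_le]
          constructor <;> linarith
      · have hkp : k = (p₂:ℤ) := by omega
        refine ⟨p₂ - 1, by omega, ?_⟩
        have hcast : (((p₂ - 1 : ℕ) : ℕ) : ℝ) = (p₂:ℝ) - 1 := by
          have : (1:ℕ) ≤ p₂ := by omega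
          push_cast [Nat.cast_sub this]
          ring
        rw [hcast]
        have hkR : ((k:ℤ):ℝ) = (p₂:ℝ) := by rw [hkp]; push_cast; ring
        rw [abs_le]
        constructor <;> linarith
    -- the phase
    set θ : ℝ := Real.arccos ((t - 4*r)/2) with hθdef
    have habs := abs_le.1 hrabs
    have hcos : Real.cos θ = (t - 4*r)/2 :=
      Real.cos_arccos (by linarith [habs.1]) (by linarith [habs.2])
    set φ : ℤ → ℂ := fun n => Complex.exp ((θ:ℂ) * (n:ℂ) * Complex.I) with hφdef
    have hφnorm : ∀ n : ℤ, ‖φ n‖ = 1 := by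
      intro n
      rw [hφdef]
      simp only []
      rw [show (θ:ℂ) * (n:ℂ) * Complex.I = ((θ * (n:ℝ) : ℝ):ℂ) * Complex.I by push_cast; ring]
      rw [Complex.norm_exp_ofReal_mul_I]
    have hrec : ∀ n : ℤ, φ (n+1) + φ (n-1) = 2 * ((Real.cos θ : ℝ):ℂ) * φ n := by
      intro n
      rw [hφdef]
      simp only []
      rw [show (θ:ℂ) * ((n+1 : ℤ):ℂ) * Complex.I
            = (θ:ℂ) * (n:ℂ) * Complex.I + (θ:ℂ) * Complex.I by push_cast; ring,
          show (θ:ℂ) * ((n-1 : ℤ):ℂ) * Complex.I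
            = (θ:ℂ) * (n:ℂ) * Complex.I + -(θ:ℂ) * Complex.I by push_cast; ring,
          Complex.exp_add, Complex.exp_add, Complex.ofReal_cos]
      have h2c := Complex.two_cos (x := (θ:ℂ))
      linear_combination -Complex.exp ((θ:ℂ) * (n:ℂ) * Complex.I) * h2c
    have hteq : (t:ℂ) - 4*(r:ℝ) = 2*((Real.cos θ : ℝ):ℂ) := by
      have : t - 4*(r:ℝ) = 2*Real.cos θ := by rw [hcos]; ring
      exact_mod_cast congrArg (fun x : ℝ => (x:ℂ)) this
    have hmod : (r:ℤ) % (p₂:ℤ) = (r:ℤ) :=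
      Int.emod_eq_of_lt (by positivity) (by exact_mod_cast hrlt)
    set B : ℝ := ‖((u⁻¹ : (H2 →L[ℂ] H2)ˣ) : H2 →L[ℂ] H2)‖ with hBdef
    -- the key estimate, for every N
    have key : ∀ N : ℕ, 2*(N:ℝ) + 1 ≤ (B * 8) ^ (2:ℝ) := by
      intro N
      set I2 : Finset ℤ := Finset.Icc (-(N:ℤ)) (N:ℤ) with hI2def
      set s : Finset (ℤ × ℤ) := I2 ×ˢ {(r:ℤ)} with hsdef
      set fN : H2 := ∑ q ∈ s, lp.single 2 q (φ q.1) with hfNdef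
      have hfN_apply : ∀ n m : ℤ, fN (n, m) = if n ∈ I2 ∧ m = (r:ℤ) then φ n else 0 := by
        intro n m
        rw [hfNdef, JacobiAux.sum_single_apply]
        congr 1
        rw [hsdef]
        simp only [Finset.mem_product, Finset.mem_singleton]
      have hfN_norm : ‖fN‖ ^ (2:ℝ) = 2*(N:ℝ) + 1 := by
        rw [hfNdef, JacobiAux.norm_sum_single_sq]
        have hone : ∀ q ∈ s, ‖φ q.1‖ ^ (2:ℝ) = 1 := fun q _ => by
          rw [hφnorm, Real.one_rpow]
        rw [Finset.sum_congr rfl hone, Finset.sum_const, nsmul_eq_mul, mul_one]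
        have hcard : s.card = 2*N + 1 := by
          rw [hsdef, Finset.card_product, Finset.card_singleton, mul_one, hI2def, Int.card_Icc]
          rw [show (N:ℤ) + 1 - (-(N:ℤ)) = ((2*N+1 : ℕ) : ℤ) by push_cast; ring,
            Int.toNat_natCast]
        rw [hcard]; push_cast; ring
      set g : H2 := ((algebraMap ℂ (H2 →L[ℂ] H2) (t:ℂ)) - 𝒥) fN with hgdef
      have hg_apply : ∀ n m : ℤ, g (n, m)
          = ((t:ℂ) - 4*(r:ℝ)) * fN (n, m) - fN (n+1, m) - fN (n-1, m)
            + (4*(r:ℝ) - ((b1 n m : ℝ):ℂ)) * fN (n, m) := by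
        intro n m
        rw [hgdef, ContinuousLinearMap.sub_apply, lp.coeFn_sub, Pi.sub_apply,
          Algebra.algebraMap_eq_smul_one, ContinuousLinearMap.smul_apply,
          ContinuousLinearMap.one_apply, lp.coeFn_smul, Pi.smul_apply, smul_eq_mul,
          hJ' fN n m]
        ring
      have hg_zero_ne : ∀ n m : ℤ, m ≠ (r:ℤ) → g (n, m) = 0 := by
        intro n m hm
        rw [hg_apply]
        rw [hfN_apply, hfN_apply, hfN_apply, if_neg (by tauto), if_neg (by tauto),
          if_neg (by tauto)]
        ring
      have hb1r : ∀ n : ℤ, ((b1 n (r:ℤ) : ℝ):ℂ) = 4*(r:ℝ) := by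
        intro n
        rw [hvb1, hmod]
        push_cast; ring
      have hg_r : ∀ n : ℤ, g (n, (r:ℤ))
          = 2*((Real.cos θ : ℝ):ℂ) * (if n ∈ I2 then φ n else 0)
            - (if n+1 ∈ I2 then φ (n+1) else 0) - (if n-1 ∈ I2 then φ (n-1) else 0) := by
        intro n
        rw [hg_apply, hb1r, hteq]
        rw [hfN_apply, hfN_apply, hfN_apply]
        simp only [and_true, if_true, eq_self_iff_true]
        ring
      set T : Finset ℤ := {-(N:ℤ)-1, -(N:ℤ), (N:ℤ), (N:ℤ)+1} with hTdef
      have hg_supp : ∀ q : ℤ × ℤ, q ∉ T ×ˢ ({(r:ℤ)} : Finset ℤ) → g q = 0 := by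
        rintro ⟨n, m⟩ hq
        by_cases hm : m = (r:ℤ)
        · subst hm
          have hnT : n ∉ T := by
            intro hn; exact hq (Finset.mem_product.2 ⟨hn, Finset.mem_singleton_self _⟩)
          rw [hTdef] at hnT
          simp only [Finset.mem_insert, Finset.mem_singleton, not_or] at hnT
          rw [hg_r]
          rcases (by omega : n ≤ -(N:ℤ)-2 ∨ ((-(N:ℤ)+1) ≤ n ∧ n ≤ (N:ℤ)-1) ∨ (N:ℤ)+2 ≤ n)
            with h | h | h
          · rw [if_neg (by rw [hI2def]; simp only [Finset.mem_Icc]; omega),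
              if_neg (by rw [hI2def]; simp only [Finset.mem_Icc]; omega),
              if_neg (by rw [hI2def]; simp only [Finset.mem_Icc]; omega)]
            ring
          · rw [if_pos (by rw [hI2def]; simp only [Finset.mem_Icc]; omega),
              if_pos (by rw [hI2def]; simp only [Finset.mem_Icc]; omega),
              if_pos (by rw [hI2def]; simp only [Finset.mem_Icc]; omega)]
            linear_combination - hrec n
          · rw [if_neg (by rw [hI2def]; simp only [Finset.mem_Icc]; omega),
              if_neg (by rw [hI2def]; simp only [Finset.mem_Icc]; omega),
              if_neg (by rw [hI2def]; simp only [Finset.mem_Icc]; omega)]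
            ring
        · exact hg_zero_ne n m hm
      have hcosbnd : ‖2*((Real.cos θ : ℝ):ℂ)‖ ≤ 2 := by
        rw [show (2:ℂ)*((Real.cos θ : ℝ):ℂ) = ((2*Real.cos θ : ℝ):ℂ) by push_cast; ring,
          Complex.norm_real, Real.norm_eq_abs, abs_mul, abs_two]
        have := Real.abs_cos_le_one θ
        nlinarith
      have hind : ∀ k : ℤ, ‖(if k ∈ I2 then φ k else 0 : ℂ)‖ ≤ 1 := by
        intro k
        by_cases hk : k ∈ I2
        · rw [if_pos hk, hφnorm]
        · rw [if_neg hk, norm_zero]; norm_num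
      have hg_bnd : ∀ q : ℤ × ℤ, ‖g q‖ ≤ 4 := by
        rintro ⟨n, m⟩
        by_cases hm : m = (r:ℤ)
        · subst hm
          rw [hg_r]
          calc ‖2*((Real.cos θ : ℝ):ℂ) * (if n ∈ I2 then φ n else 0)
                - (if n+1 ∈ I2 then φ (n+1) else 0) - (if n-1 ∈ I2 then φ (n-1) else 0)‖
              ≤ ‖2*((Real.cos θ : ℝ):ℂ) * (if n ∈ I2 then φ n else 0)
                - (if n+1 ∈ I2 then φ (n+1) else 0)‖
                + ‖(if n-1 ∈ I2 then φ (n-1) else 0)‖ := norm_sub_le _ _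
            _ ≤ (‖2*((Real.cos θ : ℝ):ℂ) * (if n ∈ I2 then φ n else 0)‖
                + ‖(if n+1 ∈ I2 then φ (n+1) else 0)‖)
                + ‖(if n-1 ∈ I2 then φ (n-1) else 0)‖ := by
                  gcongr; exact norm_sub_le _ _
            _ ≤ (2*1 + 1) + 1 := by
                  gcongr
                  · rw [norm_mul]
                    exact mul_le_mul hcosbnd (hind n) (norm_nonneg _) (by norm_num)
                  · exact hind (n+1)
                  · exact hind (n-1)
            _ = 4 := by norm_num
        · rw [hg_zero_ne n m hm, norm_zero]; norm_num
      have hgnorm : ‖g‖ ≤ 8 := by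
        refine JacobiAux.norm_le g (by norm_num) ?_
        have hsum : ∑' q : ℤ × ℤ, ‖g q‖ ^ (2:ℝ)
            = ∑ q ∈ T ×ˢ ({(r:ℤ)} : Finset ℤ), ‖g q‖ ^ (2:ℝ) := by
          refine tsum_eq_sum ?_
          intro q hq
          rw [hg_supp q hq, norm_zero, Real.zero_rpow (by norm_num)]
        rw [hsum]
        have hTcard : (T ×ˢ ({(r:ℤ)} : Finset ℤ)).card ≤ 4 := by
          rw [Finset.card_product, Finset.card_singleton, mul_one, hTdef]
          have h1 := Finset.card_insert_le (-(N:ℤ)-1) ({-(N:ℤ), (N:ℤ), (N:ℤ)+1} : Finset ℤ)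
          have h2 := Finset.card_insert_le (-(N:ℤ)) ({(N:ℤ), (N:ℤ)+1} : Finset ℤ)
          have h3 := Finset.card_insert_le ((N:ℤ)) ({(N:ℤ)+1} : Finset ℤ)
          have h4 : ({(N:ℤ)+1} : Finset ℤ).card = 1 := Finset.card_singleton _
          omega
        calc ∑ q ∈ T ×ˢ ({(r:ℤ)} : Finset ℤ), ‖g q‖ ^ (2:ℝ)
            ≤ ∑ _q ∈ T ×ˢ ({(r:ℤ)} : Finset ℤ), (16:ℝ) := by
              refine Finset.sum_le_sum fun q _ => ?_
              rw [JacobiAux.rpow_two_eq]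
              have := hg_bnd q
              nlinarith [norm_nonneg (g q)]
          _ = ((T ×ˢ ({(r:ℤ)} : Finset ℤ)).card : ℝ) * 16 := by
              rw [Finset.sum_const, nsmul_eq_mul]
          _ ≤ 4 * 16 := by
              have : ((T ×ˢ ({(r:ℤ)} : Finset ℤ)).card : ℝ) ≤ 4 := by exact_mod_cast hTcard
              nlinarith
          _ ≤ (8:ℝ) ^ (2:ℝ) := by rw [JacobiAux.rpow_two_eq]; norm_num
      have hfg : fN = ((u⁻¹ : (H2 →L[ℂ] H2)ˣ) : H2 →L[ℂ] H2) g := by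
        rw [hgdef, ← hu]
        calc fN = (1 : H2 →L[ℂ] H2) fN := (ContinuousLinearMap.one_apply fN).symm
          _ = ((((u⁻¹ : (H2 →L[ℂ] H2)ˣ) : H2 →L[ℂ] H2) * (u : H2 →L[ℂ] H2))) fN := by
              rw [u.inv_mul]
          _ = _ := ContinuousLinearMap.mul_apply _ _ _
      have hfbnd : ‖fN‖ ≤ B * 8 := by
        rw [hfg]
        calc ‖((u⁻¹ : (H2 →L[ℂ] H2)ˣ) : H2 →L[ℂ] H2) g‖ ≤ B * ‖g‖ :=
              ContinuousLinearMap.le_opNorm _ _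
          _ ≤ B * 8 := by
              have hB0 : 0 ≤ B := norm_nonneg _
              nlinarith
      calc 2*(N:ℝ) + 1 = ‖fN‖ ^ (2:ℝ) := hfN_norm.symm
        _ ≤ (B * 8) ^ (2:ℝ) :=
            Real.rpow_le_rpow (norm_nonneg _) hfbnd (by norm_num)
    obtain ⟨N, hN⟩ := exists_nat_gt ((B * 8) ^ (2:ℝ))
    have := key N
    linarith
  refine ⟨?_, ?_⟩
  · have hset : {t : ℝ | (t:ℂ) ∈ spectrum ℂ 𝒥} = Set.Icc (-2:ℝ) (4*(p₂:ℝ)-2) :=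
      Set.ext fun t => ⟨hupper t, hlower t⟩
    rw [hset, Real.volume_Icc]
    congr 1; ring
  · intro α β
    simp only [hvb0, hva1, map_zero, map_one, norm_zero, norm_one, Finset.sum_const, Finset.card_range,
      nsmul_eq_mul, mul_one, mul_zero, zero_add]
end
end
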